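/- arXiv:1711.02679 — 4 statements merged into one kernel-verified Lean document; each statement's English description precedes it below -/
import Mathlib

section
/- Fix T ≥ 1, N ≥ 1, M ≥ 1, and action values c_1, ..., c_M ∈ ℝ. For each instance i ∈ {1,...,N}, action j ∈ {1,...,M}, and time t ∈ {1,...,T}, let w^{(i)}_{t,j} ≥ 0 and y_t ∈ {0,1}. Define W_{i,j} := ∑_{t=1}^T w^{(i)}_{t,j}, the per-instance calibration contributions C^{(i)}_j := (W_{i,j}/T)·(ρ^{(i)}_j − c_j)^2 where ρ^{(i)}_j := (∑_t w^{(i)}_{t,j} y_t)/W_{i,j} for W_{i,j} > 0 (and C^{(i)}_j := 0 when W_{i,j} = 0), and analogously the pooled contributions C_j := ((∑_i W_{i,j})/T)·(ρ_j − c_j)^2 with ρ_j := (∑_i ∑_t w^{(i)}_{t,j} y_t)/(∑_i W_{i,j}) (C_j := 0 when ∑_i W_{i,j} = 0). Then the total pooled calibration error satisfies ∑_{j=1}^M C_j ≤ ∑_{i=1}^N ∑_{j=1}^M C^{(i)}_j. -/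
open Finset

/-- The total pooled calibration error of the recalibration framework is at most the
sum over the `N` calibration instances of each instance's calibration error. -/
theorem total_pooled_calibration_le
    (T N M : ℕ) (hT : 1 ≤ T) (hN : 1 ≤ N) (hM : 1 ≤ M)
    (c : Fin M → ℝ)
    (w : Fin N → Fin T → Fin M → ℝ) (y : Fin T → ℝ)
    (hw : ∀ i t j, 0 ≤ w i t j) (hy : ∀ t, y t = 0 ∨ y t = 1)
    (Wij : Fin N → Fin M → ℝ) (hWij : ∀ i j, Wij i j = ∑ t, w i t j)
    (ρij : Fin N → Fin M → ℝ)
    (hρij : ∀ i j, 0 < Wij i j → ρij i j = (∑ t, w i t j * y t) / Wij i j)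
    (Ci : Fin N → Fin M → ℝ)
    (hCi : ∀ i j, Ci i j =
      if 0 < Wij i j then (Wij i j / T) * (ρij i j - c j) ^ 2 else 0)
    (ρ : Fin M → ℝ)
    (hρ : ∀ j, 0 < ∑ i, Wij i j →
      ρ j = (∑ i, ∑ t, w i t j * y t) / (∑ i, Wij i j))
    (C : Fin M → ℝ)
    (hC : ∀ j, C j =
      if 0 < ∑ i, Wij i j then ((∑ i, Wij i j) / T) * (ρ j - c j) ^ 2 else 0) :
    ∑ j, C j ≤ ∑ i, ∑ j, Ci i j := by
  have hWnn : ∀ i j, 0 ≤ Wij i j := fun i j => by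
    rw [hWij]; exact Finset.sum_nonneg fun t _ => hw i t j
  have hCinn : ∀ i j, 0 ≤ Ci i j := fun i j => by
    rw [hCi]; split
    · exact mul_nonneg (div_nonneg (hWnn i j) (Nat.cast_nonneg T)) (sq_nonneg _)
    · exact le_refl 0
  rw [Finset.sum_comm]
  apply Finset.sum_le_sum
  intro j _
  by_cases hS : 0 < ∑ i, Wij i j
  · set g : Fin N → ℝ := fun i => if 0 < Wij i j then ρij i j else c j with hg
    have hWg : ∀ i, Wij i j * g i = ∑ t, w i t j * y t := by
      intro i
      by_cases h : 0 < Wij i j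
      · simp only [hg, if_pos h, hρij i j h]
        field_simp
      · have hW0 : Wij i j = 0 := le_antisymm (not_lt.mp h) (hWnn i j)
        have hz : ∀ t ∈ Finset.univ, w i t j = 0 :=
          (Finset.sum_eq_zero_iff_of_nonneg (fun t _ => hw i t j)).mp
            (by rw [← hWij]; exact hW0)
        rw [hW0, zero_mul]
        exact (Finset.sum_eq_zero fun t ht => by rw [hz t ht, zero_mul]).symm
    have hCi' : ∀ i, Ci i j = Wij i j / T * (g i - c j) ^ 2 := by
      intro i
      rw [hCi]
      by_cases h : 0 < Wij i j
      · simp [hg, h]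
      · have hW0 : Wij i j = 0 := le_antisymm (not_lt.mp h) (hWnn i j)
        simp [h, hW0]
    rw [hC j, if_pos hS, hρ j hS]
    simp only [hCi']
    set S := ∑ i, Wij i j with hSdef
    have hsum : ∑ i, ∑ t, w i t j * y t = ∑ i, Wij i j * g i := by
      exact Finset.sum_congr rfl fun i _ => (hWg i).symm
    rw [hsum]
    have key : S * ((∑ i, Wij i j * g i) / S - c j) ^ 2 ≤ ∑ i, Wij i j * (g i - c j) ^ 2 := by
      have h1 : (∑ i, Wij i j * (g i - c j)) ^ 2 ≤ S * ∑ i, Wij i j * (g i - c j) ^ 2 := by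
        have := Finset.sum_mul_sq_le_sq_mul_sq Finset.univ
          (fun i => Real.sqrt (Wij i j)) (fun i => Real.sqrt (Wij i j) * (g i - c j))
        calc (∑ i, Wij i j * (g i - c j)) ^ 2
            = (∑ i, Real.sqrt (Wij i j) * (Real.sqrt (Wij i j) * (g i - c j))) ^ 2 := by
              congr 1
              refine Finset.sum_congr rfl fun i _ => ?_
              rw [← mul_assoc, Real.mul_self_sqrt (hWnn i j)]
          _ ≤ (∑ i, Real.sqrt (Wij i j) ^ 2) * ∑ i, (Real.sqrt (Wij i j) * (g i - c j)) ^ 2 :=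
              this
          _ = S * ∑ i, Wij i j * (g i - c j) ^ 2 := by
              congr 1
              · exact Finset.sum_congr rfl fun i _ => Real.sq_sqrt (hWnn i j)
              · refine Finset.sum_congr rfl fun i _ => ?_
                rw [mul_pow, Real.sq_sqrt (hWnn i j)]
      have h2 : ∑ i, Wij i j * (g i - c j) = S * ((∑ i, Wij i j * g i) / S - c j) := by
        field_simp
        ring_nf
        rw [Finset.sum_sub_distrib, ← Finset.sum_mul]
        ring
      rw [h2] at h1
      have h3 : (S * ((∑ i, Wij i j * g i) / S - c j)) ^ 2
          = S * (S * ((∑ i, Wij i j * g i) / S - c j) ^ 2) := by ring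
      rw [h3] at h1
      exact le_of_mul_le_mul_left h1 hS
    have hT0 : (0:ℝ) < T := by exact_mod_cast hT
    calc S / ↑T * ((∑ i, Wij i j * g i) / S - c j) ^ 2
        = (S * ((∑ i, Wij i j * g i) / S - c j) ^ 2) / T := by ring
      _ ≤ (∑ i, Wij i j * (g i - c j) ^ 2) / T := by
          gcongr
      _ = ∑ i, Wij i j / ↑T * (g i - c j) ^ 2 := by
          rw [Finset.sum_div]
          exact Finset.sum_congr rfl fun i _ => by ring
  · rw [hC j, if_neg hS]
    exact Finset.sum_nonneg fun i _ => hCinn i j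
end

section
/- Fix T ≥ 1 and N ≥ 1. Let y_t ∈ {0,1}, p_t ∈ [0,1], and p^F_t ∈ [0,1] for t = 1,...,T, and let ι : {1,...,T} → {0,...,N−1} be a bucket assignment such that p^F_t ∈ [ι(t)/N, (ι(t)+1)/N] for all t. For each i ∈ {0,...,N−1}, let T_i := #{t : ι(t) = i}, and when T_i > 0 define the per-bucket regret R_i := (1/T_i) ∑_{t : ι(t)=i} ((y_t − p_t)^2 − (y_t − i/N)^2) (and R_i := 0 when T_i = 0). Then (1/T) ∑_{t=1}^T (y_t − p_t)^2 − (1/T) ∑_{t=1}^T (y_t − p^F_t)^2 ≤ ∑_{i=0}^{N−1} (T_i/T)·R_i + 2/N. -/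
open Finset

/-- Finite-horizon regret bound of the recalibration framework: the average squared
loss of the recalibrated predictions exceeds that of the original forecasts by at
most the weighted per-bucket regrets plus `2/N`. -/
theorem recalibration_regret_bound
    (T N : ℕ) (hT : 1 ≤ T) (hN : 1 ≤ N)
    (y p pF : Fin T → ℝ) (ι : Fin T → Fin N)
    (hy : ∀ t, y t = 0 ∨ y t = 1)
    (hp : ∀ t, p t ∈ Set.Icc (0 : ℝ) 1)
    (hpF : ∀ t, pF t ∈ Set.Icc ((ι t : ℝ) / N) (((ι t : ℝ) + 1) / N))
    (Ti : Fin N → ℕ) (hTi : ∀ i, Ti i = (univ.filter (fun t => ι t = i)).card)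
    (R : Fin N → ℝ)
    (hR : ∀ i, R i =
      if 0 < Ti i then
        (1 / (Ti i : ℝ)) * ∑ t ∈ univ.filter (fun t => ι t = i),
          ((y t - p t) ^ 2 - (y t - (i : ℝ) / N) ^ 2)
      else 0) :
    (1 / (T : ℝ)) * ∑ t, (y t - p t) ^ 2 - (1 / (T : ℝ)) * ∑ t, (y t - pF t) ^ 2 ≤
      ∑ i, ((Ti i : ℝ) / T) * R i + 2 / N := by
  have hN0 : (0:ℝ) < N := by exact_mod_cast hN
  have hT0 : (0:ℝ) < T := by exact_mod_cast hT
  -- key pointwise bound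
  have key : ∀ t, (y t - (ι t : ℝ)/N)^2 - (y t - pF t)^2 ≤ 2/N := by
    intro t
    obtain ⟨h1, h2⟩ := hpF t
    have ha0 : (0:ℝ) ≤ (ι t : ℝ)/N := by positivity
    have hb1 : pF t - (ι t : ℝ)/N ≤ 1/N := by
      have he : ((ι t : ℝ) + 1)/N = (ι t : ℝ)/N + 1/N := by ring
      rw [he] at h2; linarith
    have hinv : (0:ℝ) < 1/N := by positivity
    have hb1' : pF t ≤ 1 := by
      have hlt : ((ι t : ℕ) : ℝ) + 1 ≤ N := by exact_mod_cast (ι t).isLt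
      have : ((ι t : ℝ) + 1)/N ≤ 1 := by
        rw [div_le_one hN0]; exact hlt
      linarith
    have hab0 : (0:ℝ) ≤ (ι t : ℝ)/N + pF t := by linarith
    have h2N : (2:ℝ)/N = 2 * (1/N) := by ring
    rcases hy t with h | h <;> rw [h, h2N]
    · nlinarith [mul_nonneg (sub_nonneg.mpr h1) hab0]
    · have h2ab : (0:ℝ) ≤ 2 - (ι t : ℝ)/N - pF t := by linarith
      nlinarith [mul_le_mul_of_nonneg_right hb1 h2ab,
        mul_nonneg (le_of_lt hinv) hab0]
  have hTR : ∀ i, (Ti i : ℝ) * R i =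
      ∑ t ∈ univ.filter (fun t => ι t = i), ((y t - p t)^2 - (y t - (i : ℝ)/N)^2) := by
    intro i
    rw [hR i]
    by_cases h : 0 < Ti i
    · rw [if_pos h]
      have hne : (Ti i : ℝ) ≠ 0 := Nat.cast_ne_zero.mpr h.ne'
      rw [← mul_assoc, mul_one_div_cancel hne, one_mul]
    · rw [if_neg h]
      have hc : (univ.filter (fun t => ι t = i)) = ∅ := by
        rw [← Finset.card_eq_zero, ← hTi i]; omega
      rw [hc, Finset.sum_empty, mul_zero]
  -- decompose the total sums by buckets
  have hfib1 : ∑ t, ((y t - p t)^2 - (y t - (ι t : ℝ)/N)^2)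
      = ∑ i : Fin N, ∑ t ∈ univ.filter (fun t => ι t = i),
          ((y t - p t)^2 - (y t - (i : ℝ)/N)^2) := by
    rw [← Finset.sum_fiberwise univ ι (fun t => (y t - p t)^2 - (y t - (ι t : ℝ)/N)^2)]
    refine Finset.sum_congr rfl fun i _ => Finset.sum_congr rfl fun t ht => ?_
    simp only [Finset.mem_filter] at ht
    rw [ht.2]
  have hsum2 : ∑ t, ((y t - (ι t : ℝ)/N)^2 - (y t - pF t)^2) ≤ (T : ℝ) * (2/N) := by
    calc ∑ t, ((y t - (ι t : ℝ)/N)^2 - (y t - pF t)^2)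
        ≤ ∑ _t : Fin T, (2/N : ℝ) := Finset.sum_le_sum fun t _ => key t
      _ = (T : ℝ) * (2/N) := by simp [Finset.sum_const, mul_comm]
  have hmain : ∑ t, (y t - p t)^2 - ∑ t, (y t - pF t)^2
      = ∑ i : Fin N, (Ti i : ℝ) * R i
        + ∑ t, ((y t - (ι t : ℝ)/N)^2 - (y t - pF t)^2) := by
    have : ∑ i : Fin N, (Ti i : ℝ) * R i
        = ∑ t, ((y t - p t)^2 - (y t - (ι t : ℝ)/N)^2) := by
      rw [hfib1]; exact Finset.sum_congr rfl fun i _ => hTR i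
    rw [this, Finset.sum_sub_distrib, Finset.sum_sub_distrib]
    ring
  have hfinal : (1 / (T : ℝ)) * (∑ t, (y t - p t)^2 - ∑ t, (y t - pF t)^2)
      ≤ (1 / (T : ℝ)) * (∑ i : Fin N, (Ti i : ℝ) * R i + (T : ℝ) * (2/N)) := by
    apply mul_le_mul_of_nonneg_left _ (by positivity)
    rw [hmain]
    linarith
  calc (1 / (T : ℝ)) * ∑ t, (y t - p t) ^ 2 - (1 / (T : ℝ)) * ∑ t, (y t - pF t) ^ 2
      = (1 / (T : ℝ)) * (∑ t, (y t - p t)^2 - ∑ t, (y t - pF t)^2) := by ring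
    _ ≤ (1 / (T : ℝ)) * (∑ i : Fin N, (Ti i : ℝ) * R i + (T : ℝ) * (2/N)) := hfinal
    _ = ∑ i, ((Ti i : ℝ) / T) * R i + 2 / N := by
        rw [mul_add, Finset.mul_sum]
        congr 1
        · exact Finset.sum_congr rfl fun i _ => by field_simp
        · field_simp
end

section
/- Let N ≥ 1, let y : ℕ → {0,1}, p : ℕ → [0,1], p^F : ℕ → [0,1], and ι : ℕ → {0,...,N−1} with p^F_t ∈ [ι(t)/N, (ι(t)+1)/N] for all t. For each T and bucket i let T_i(T) := #{t ≤ T : ι(t) = i} and R_i(T) := (1/T_i(T)) ∑_{t ≤ T, ι(t)=i} ((y_t − p_t)^2 − (y_t − i/N)^2) when T_i(T) > 0 (else 0). If for every bucket i, limsup_{T→∞} R_i(T) ≤ 0 and the values R_i(T) are uniformly bounded above, then limsup_{T→∞} [ (1/T) ∑_{t=1}^T (y_t − p_t)^2 − (1/T) ∑_{t=1}^T (y_t − p^F_t)^2 ] ≤ 2/N. -/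
open Finset Filter

/-- Asymptotic regret bound of the recalibration framework: if every bucket's
per-bucket regret (against the constant action `i/N`) is asymptotically nonpositive
and uniformly bounded above, then the recalibrated forecasts are asymptotically at
most `2/N` worse in average squared loss than the original forecasts. -/
theorem recalibration_limsup_regret
    (N : ℕ) (hN : 1 ≤ N)
    (y p pF : ℕ → ℝ) (ι : ℕ → Fin N)
    (hy : ∀ t, y t = 0 ∨ y t = 1)
    (hp : ∀ t, p t ∈ Set.Icc (0 : ℝ) 1)
    (hpF : ∀ t, pF t ∈ Set.Icc ((ι t : ℝ) / N) (((ι t : ℝ) + 1) / N))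
    (Ti : ℕ → Fin N → ℕ)
    (hTi : ∀ T i, Ti T i = ((range T).filter (fun t => ι t = i)).card)
    (R : ℕ → Fin N → ℝ)
    (hR : ∀ T i, R T i =
      if 0 < Ti T i then
        (1 / (Ti T i : ℝ)) * ∑ t ∈ (range T).filter (fun t => ι t = i),
          ((y t - p t) ^ 2 - (y t - (i : ℝ) / N) ^ 2)
      else 0)
    (hRlimsup : ∀ i, limsup (fun T => R T i) atTop ≤ 0)
    (hRbdd : ∃ B : ℝ, ∀ i T, R T i ≤ B) :
    limsup (fun T : ℕ =>
        (1 / (T : ℝ)) * ∑ t ∈ range T, (y t - p t) ^ 2 -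
          (1 / (T : ℝ)) * ∑ t ∈ range T, (y t - pF t) ^ 2) atTop ≤ 2 / N := by
  obtain ⟨B, hB⟩ := hRbdd
  have hNpos : (0 : ℝ) < N := by exact_mod_cast hN
  set g : ℕ → ℝ := fun T =>
      (1 / (T : ℝ)) * ∑ t ∈ range T, (y t - p t) ^ 2 -
        (1 / (T : ℝ)) * ∑ t ∈ range T, (y t - pF t) ^ 2 with hg
  -- basic bounds on pF
  have hpF01 : ∀ t, 0 ≤ pF t ∧ pF t ≤ 1 := by
    intro t
    obtain ⟨ha, hb⟩ := hpF t
    have hi0 : (0 : ℝ) ≤ (ι t : ℝ) := by positivity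
    have hiN : ((ι t : ℝ) + 1) ≤ N := by
      have := (ι t).isLt
      exact_mod_cast Nat.succ_le_of_lt this
    constructor
    · exact le_trans (by positivity) ha
    · exact le_trans hb (by rw [div_le_one hNpos]; exact hiN)
  -- pointwise: (y t - ι t / N)^2 ≤ (y t - pF t)^2 + 2/N
  have hpt : ∀ t, (y t - (ι t : ℝ) / N) ^ 2 ≤ (y t - pF t) ^ 2 + 2 / N := by
    intro t
    obtain ⟨ha, hb⟩ := hpF t
    obtain ⟨h0, h4⟩ := hpF01 t
    have h2 : pF t ≤ (ι t : ℝ) / N + 1 / N := by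
      calc pF t ≤ ((ι t : ℝ) + 1) / N := hb
        _ = (ι t : ℝ) / N + 1 / N := by ring
    have h3 : (0 : ℝ) ≤ (ι t : ℝ) / N := by positivity
    have h5 : (0 : ℝ) < 1 / (N : ℝ) := by positivity
    have hc : (2 : ℝ) / N = 2 * (1 / (N : ℝ)) := by ring
    rw [hc]
    set a := (ι t : ℝ) / N with hadef
    set c := (1 : ℝ) / N with hcdef
    have e1 : (pF t - a) * (2 - a - pF t) ≤ c * 2 :=
      mul_le_mul (by linarith) (by linarith) (by linarith) (by linarith)
    have e2 : 0 ≤ (pF t - a) * (pF t + a) :=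
      mul_nonneg (by linarith) (by linarith)
    rcases hy t with h | h <;> rw [h] <;> nlinarith [e1, e2]
  -- decomposition of the loss of p
  have hdec : ∀ T, ∑ t ∈ range T, (y t - p t) ^ 2
      = ∑ i : Fin N, (Ti T i : ℝ) * R T i
        + ∑ t ∈ range T, (y t - (ι t : ℝ) / N) ^ 2 := by
    intro T
    have e1 : ∑ t ∈ range T, (y t - p t) ^ 2
        = ∑ i : Fin N, ∑ t ∈ (range T).filter (fun t => ι t = i), (y t - p t) ^ 2 :=
      (Finset.sum_fiberwise (range T) ι (fun t => (y t - p t) ^ 2)).symm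
    have e2 : ∑ t ∈ range T, (y t - (ι t : ℝ) / N) ^ 2
        = ∑ i : Fin N, ∑ t ∈ (range T).filter (fun t => ι t = i),
            (y t - (i : ℝ) / N) ^ 2 := by
      rw [← Finset.sum_fiberwise (range T) ι (fun t => (y t - (ι t : ℝ) / N) ^ 2)]
      refine Finset.sum_congr rfl fun i _ => Finset.sum_congr rfl fun t ht => ?_
      rw [Finset.mem_filter] at ht
      rw [ht.2]
    rw [e1, e2, ← Finset.sum_add_distrib]
    refine Finset.sum_congr rfl fun i _ => ?_
    by_cases hTipos : 0 < Ti T i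
    · have hne : (Ti T i : ℝ) ≠ 0 := by positivity
      rw [hR T i, if_pos hTipos, ← mul_assoc, mul_one_div_cancel hne, one_mul,
        Finset.sum_sub_distrib]
      ring
    · have h0 : Ti T i = 0 := Nat.eq_zero_of_not_pos hTipos
      have hemp : (range T).filter (fun t => ι t = i) = ∅ := by
        rw [← Finset.card_eq_zero, ← hTi]; exact h0
      rw [hemp, h0]
      simp
  -- the bucket sizes sum to T
  have hTsum : ∀ T, ∑ i : Fin N, (Ti T i : ℝ) = T := by
    intro T
    have h := Finset.card_eq_sum_card_fiberwise
      (f := ι) (s := range T) (t := Finset.univ) (fun x _ => Finset.mem_univ _)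
    have h2 : ∑ i : Fin N, Ti T i = T := by
      simp only [hTi]
      rw [← h, card_range]
    exact_mod_cast h2
  -- the key eventual bound
  have key : ∀ ε > (0 : ℝ), ∀ᶠ T in atTop, g T ≤ 2 / N + ε := by
    intro ε hε
    have hev : ∀ᶠ T in atTop, ∀ i, R T i < ε := by
      rw [Filter.eventually_all]
      intro i
      have hbdd : IsBoundedUnder (· ≤ ·) atTop (fun T => R T i) :=
        isBoundedUnder_of ⟨B, fun T => hB i T⟩
      exact eventually_lt_of_limsup_lt (lt_of_le_of_lt (hRlimsup i) hε) hbdd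
    filter_upwards [hev, eventually_ge_atTop 1] with T hT hT1
    have hTpos : (0 : ℝ) < T := by exact_mod_cast hT1
    have hsum2 : ∑ t ∈ range T, (y t - (ι t : ℝ) / N) ^ 2
        ≤ ∑ t ∈ range T, (y t - pF t) ^ 2 + T * (2 / N) := by
      calc ∑ t ∈ range T, (y t - (ι t : ℝ) / N) ^ 2
          ≤ ∑ t ∈ range T, ((y t - pF t) ^ 2 + 2 / N) :=
            Finset.sum_le_sum fun t _ => hpt t
        _ = ∑ t ∈ range T, (y t - pF t) ^ 2 + T * (2 / N) := by
            rw [Finset.sum_add_distrib, Finset.sum_const, card_range, nsmul_eq_mul]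
    have hsum1 : ∑ i : Fin N, (Ti T i : ℝ) * R T i ≤ T * ε := by
      calc ∑ i : Fin N, (Ti T i : ℝ) * R T i
          ≤ ∑ i : Fin N, (Ti T i : ℝ) * ε :=
            Finset.sum_le_sum fun i _ =>
              mul_le_mul_of_nonneg_left (le_of_lt (hT i)) (by positivity)
        _ = (∑ i : Fin N, (Ti T i : ℝ)) * ε := by rw [Finset.sum_mul]
        _ = T * ε := by rw [hTsum T]
    have hdiff : ∑ t ∈ range T, (y t - p t) ^ 2 - ∑ t ∈ range T, (y t - pF t) ^ 2
        ≤ T * (2 / N + ε) := by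
      rw [hdec T]
      nlinarith [hsum1, hsum2]
    have : g T = (1 / (T : ℝ)) *
        (∑ t ∈ range T, (y t - p t) ^ 2 - ∑ t ∈ range T, (y t - pF t) ^ 2) := by
      rw [hg]; ring
    rw [this]
    calc (1 / (T : ℝ)) *
        (∑ t ∈ range T, (y t - p t) ^ 2 - ∑ t ∈ range T, (y t - pF t) ^ 2)
        ≤ (1 / (T : ℝ)) * (T * (2 / N + ε)) :=
          mul_le_mul_of_nonneg_left hdiff (by positivity)
      _ = 2 / N + ε := by field_simp
  -- coboundedness: g is bounded below by -1
  have hco : IsCoboundedUnder (· ≤ ·) atTop g := by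
    apply isCoboundedUnder_le_of_eventually_le atTop (x := (-1 : ℝ))
    refine Eventually.of_forall fun T => ?_
    have h1 : 0 ≤ (1 / (T : ℝ)) * ∑ t ∈ range T, (y t - p t) ^ 2 := by positivity
    have h2 : (1 / (T : ℝ)) * ∑ t ∈ range T, (y t - pF t) ^ 2 ≤ 1 := by
      have hb : ∑ t ∈ range T, (y t - pF t) ^ 2 ≤ T := by
        calc ∑ t ∈ range T, (y t - pF t) ^ 2 ≤ ∑ t ∈ range T, (1 : ℝ) := by
              refine Finset.sum_le_sum fun t _ => ?_
              obtain ⟨h0, h4⟩ := hpF01 t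
              rcases hy t with h | h <;> rw [h] <;> nlinarith
          _ = T := by simp
      rcases Nat.eq_zero_or_pos T with h | h
      · simp [h]
      · have hTpos : (0 : ℝ) < T := by exact_mod_cast h
        rw [div_mul_eq_mul_div, one_mul, div_le_one hTpos]
        exact hb
    simp only [hg]
    linarith
  have hfin : ∀ ε > (0 : ℝ), limsup g atTop ≤ 2 / N + ε := fun ε hε =>
    limsup_le_of_le hco (key ε hε)
  by_contra hlt
  push_neg at hlt
  have := hfin ((limsup g atTop - 2 / N) / 2) (by linarith)
  linarith
end

section
/- Fix T ≥ 1, N ≥ 1, and K ≥ 1. Let y_t ∈ {0,1}, p_t ∈ [0,1], p^F_t ∈ [0,1], and expert predictions p^{(k)}_t ∈ [0,1] for t = 1,...,T and k = 1,...,K, and let ι : {1,...,T} → {0,...,N−1} satisfy p^F_t ∈ [ι(t)/N, (ι(t)+1)/N] for all t. Define T_i and per-bucket regrets R_i as: T_i := #{t : ι(t) = i} and R_i := (1/T_i) ∑_{t : ι(t)=i} ((y_t − p_t)^2 − (y_t − i/N)^2) when T_i > 0 (else 0). Suppose there is R_ext ≥ 0 such that for every k, (1/T) ∑_{t=1}^T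 (y_t − p^F_t)^2 ≤ (1/T) ∑_{t=1}^T (y_t − p^{(k)}_t)^2 + R_ext. Then for every k ∈ {1,...,K}: (1/T) ∑_{t=1}^T (y_t − p_t)^2 ≤ (1/T) ∑_{t=1}^T (y_t − p^{(k)}_t)^2 + R_ext + ∑_{i=0}^{N−1} (T_i/T)·R_i + 2/N. -/
open Finset

/-- Calibration with advice from `K` experts: the recalibrated predictions have
average squared loss at most that of every expert, plus the external regret of the
aggregating forecaster, plus the weighted per-bucket regrets, plus `2/N`. -/
theorem recalibration_experts_regret_bound
    (T N K : ℕ) (hT : 1 ≤ T) (hN : 1 ≤ N) (hK : 1 ≤ K)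
    (y p pF : Fin T → ℝ) (pk : Fin K → Fin T → ℝ) (ι : Fin T → Fin N)
    (hy : ∀ t, y t = 0 ∨ y t = 1)
    (hp : ∀ t, p t ∈ Set.Icc (0 : ℝ) 1)
    (hpF : ∀ t, pF t ∈ Set.Icc ((ι t : ℝ) / N) (((ι t : ℝ) + 1) / N))
    (hpk : ∀ k t, pk k t ∈ Set.Icc (0 : ℝ) 1)
    (Ti : Fin N → ℕ) (hTi : ∀ i, Ti i = (univ.filter (fun t => ι t = i)).card)
    (R : Fin N → ℝ)
    (hR : ∀ i, R i =
      if 0 < Ti i then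
        (1 / (Ti i : ℝ)) * ∑ t ∈ univ.filter (fun t => ι t = i),
          ((y t - p t) ^ 2 - (y t - (i : ℝ) / N) ^ 2)
      else 0)
    (Rext : ℝ) (hRext : 0 ≤ Rext)
    (hext : ∀ k, (1 / (T : ℝ)) * ∑ t, (y t - pF t) ^ 2 ≤
      (1 / (T : ℝ)) * ∑ t, (y t - pk k t) ^ 2 + Rext) :
    ∀ k, (1 / (T : ℝ)) * ∑ t, (y t - p t) ^ 2 ≤
      (1 / (T : ℝ)) * ∑ t, (y t - pk k t) ^ 2 + Rext +
        ∑ i, ((Ti i : ℝ) / T) * R i + 2 / N := by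
  intro k
  have hNpos : (0:ℝ) < N := by exact_mod_cast Nat.lt_of_lt_of_le Nat.zero_lt_one hN
  have hTpos : (0:ℝ) < T := by exact_mod_cast Nat.lt_of_lt_of_le Nat.zero_lt_one hT
  -- pointwise bound
  have hpt : ∀ t, (y t - (ι t : ℝ)/N)^2 ≤ (y t - pF t)^2 + 2/N := by
    intro t
    obtain ⟨h1, h2⟩ := hpF t
    have hy0 : 0 ≤ y t := by rcases hy t with h|h <;> simp [h]
    have hy1 : y t ≤ 1 := by rcases hy t with h|h <;> simp [h]
    set a := pF t
    set b := (ι t : ℝ)/N with hb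
    have hb0 : 0 ≤ b := by positivity
    have hab : b ≤ a := h1
    have hab2 : a ≤ b + 1/N := by
      have heq : ((ι t : ℝ) + 1)/N = b + 1/N := by rw [hb, add_div]
      linarith [heq ▸ h2]
    have key : (a - b)*(2*y t - a - b) ≤ 2/N := by
      rcases le_or_gt 0 (2*y t - a - b) with h|h
      · have h3 : a - b ≤ 1/N := by linarith
        have h4 : 2*y t - a - b ≤ 2 := by linarith
        calc (a - b)*(2*y t - a - b) ≤ (1/N)*2 := by
              apply mul_le_mul h3 h4 h (by positivity)
          _ = 2/N := by ring
      · have hnp : (a - b)*(2*y t - a - b) ≤ 0 :=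
          mul_nonpos_of_nonneg_of_nonpos (by linarith) (le_of_lt h)
        have : (0:ℝ) ≤ 2/N := by positivity
        linarith
    nlinarith [key]
  have hfib : ∀ (f : Fin T → ℝ),
      ∑ i, ∑ t ∈ univ.filter (fun t => ι t = i), f t = ∑ t, f t := by
    intro f
    exact Finset.sum_fiberwise univ ι f
  have hTR : ∀ i, (Ti i : ℝ) * R i =
      ∑ t ∈ univ.filter (fun t => ι t = i),
        ((y t - p t)^2 - (y t - (ι t : ℝ)/N)^2) := by
    intro i
    have hcong : ∑ t ∈ univ.filter (fun t => ι t = i),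
        ((y t - p t)^2 - (y t - (ι t : ℝ)/N)^2) =
        ∑ t ∈ univ.filter (fun t => ι t = i),
        ((y t - p t)^2 - (y t - (i : ℝ)/N)^2) := by
      apply Finset.sum_congr rfl
      intro t ht
      simp only [mem_filter] at ht
      rw [ht.2]
    rw [hcong, hR i]
    split_ifs with h
    · have hTi0 : (0:ℝ) < (Ti i : ℝ) := by exact_mod_cast h
      field_simp
      apply Finset.sum_congr rfl
      intro x _
      ring
    · have h0 : Ti i = 0 := Nat.eq_zero_of_not_pos h
      have : (univ.filter (fun t => ι t = i)).card = 0 := by rw [← hTi i]; exact h0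
      rw [Finset.card_eq_zero] at this
      simp [this, h0]
  have hsplit : ∑ t, (y t - p t)^2 =
      (∑ i, (Ti i : ℝ) * R i) + ∑ t, (y t - (ι t : ℝ)/N)^2 := by
    have h1 : ∑ i, (Ti i : ℝ) * R i =
        ∑ t, ((y t - p t)^2 - (y t - (ι t : ℝ)/N)^2) := by
      rw [← hfib (fun t => (y t - p t)^2 - (y t - (ι t : ℝ)/N)^2)]
      exact Finset.sum_congr rfl fun i _ => hTR i
    rw [h1, Finset.sum_sub_distrib]
    ring
  have hsum2 : ∑ t, (y t - (ι t : ℝ)/N)^2 ≤ ∑ t, (y t - pF t)^2 + T * (2/N) := by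
    calc ∑ t, (y t - (ι t : ℝ)/N)^2 ≤ ∑ t, ((y t - pF t)^2 + 2/N) :=
          Finset.sum_le_sum fun t _ => hpt t
      _ = ∑ t, (y t - pF t)^2 + T * (2/N) := by
          rw [Finset.sum_add_distrib, Finset.sum_const]
          simp [mul_comm]
  have hext' := hext k
  have hdiv : ∑ i, ((Ti i : ℝ) / T) * R i = (1/(T:ℝ)) * ∑ i, (Ti i : ℝ) * R i := by
    rw [Finset.mul_sum]
    apply Finset.sum_congr rfl
    intro i _
    ring
  rw [hdiv]
  have h5 : (1/(T:ℝ)) * ∑ t, (y t - p t)^2 =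
      (1/(T:ℝ)) * (∑ i, (Ti i : ℝ) * R i) + (1/(T:ℝ)) * ∑ t, (y t - (ι t : ℝ)/N)^2 := by
    rw [hsplit]; ring
  have h6 : (1/(T:ℝ)) * ∑ t, (y t - (ι t : ℝ)/N)^2 ≤
      (1/(T:ℝ)) * ∑ t, (y t - pF t)^2 + 2/N := by
    have := mul_le_mul_of_nonneg_left hsum2 (le_of_lt (by positivity : (0:ℝ) < 1/(T:ℝ)))
    calc (1/(T:ℝ)) * ∑ t, (y t - (ι t : ℝ)/N)^2
        ≤ (1/(T:ℝ)) * (∑ t, (y t - pF t)^2 + T * (2/N)) := this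
      _ = (1/(T:ℝ)) * ∑ t, (y t - pF t)^2 + 2/N := by field_simp
  linarith
end
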